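/- The function x ↦ Δ(√x) = √x − log(1 + √x) is concave on [0, ∞). -/

import Mathlib

open Real

lemma delta_sqrt_hasDeriv {x : ℝ} (hx : 0 < x) :
    HasDerivAt (fun x => Real.sqrt x - Real.log (1 + Real.sqrt x))
      (1 / (2 * (1 + Real.sqrt x))) x := by
  have hs : 0 < Real.sqrt x := Real.sqrt_pos.mpr hx
  have h1 : HasDerivAt Real.sqrt (1 / (2 * Real.sqrt x)) x :=
    Real.hasDerivAt_sqrt (ne_of_gt hx)
  have hpos : (0:ℝ) < 1 + Real.sqrt x := by linarith
  have h2 : HasDerivAt (fun x => Real.log (1 + Real.sqrt x))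
      ((1 / (2 * Real.sqrt x)) / (1 + Real.sqrt x)) x := by
    have := ((hasDerivAt_const x (1:ℝ)).add h1).log (ne_of_gt hpos)
    simpa [zero_add] using this
  have := h1.sub h2
  refine this.congr_deriv ?_
  field_simp
  ring

theorem delta_sqrt_concave :
    ConcaveOn ℝ (Set.Ici (0 : ℝ))
      (fun x => Real.sqrt x - Real.log (1 + Real.sqrt x)) := by
  have hint : interior (Set.Ici (0:ℝ)) = Set.Ioi 0 := interior_Ici
  apply AntitoneOn.concaveOn_of_deriv (convex_Ici 0)
  · apply ContinuousOn.sub Real.continuous_sqrt.continuousOn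
    apply ContinuousOn.log ((continuous_const.add Real.continuous_sqrt).continuousOn)
    intro x hx
    have := Real.sqrt_nonneg x
    simp only [Pi.add_apply]
    positivity
  · rw [hint]
    intro x hx
    exact (delta_sqrt_hasDeriv hx).differentiableAt.differentiableWithinAt
  · rw [hint]
    intro x hx y hy hxy
    rw [(delta_sqrt_hasDeriv hx).deriv, (delta_sqrt_hasDeriv hy).deriv]
    have hsx : 0 < Real.sqrt x := Real.sqrt_pos.mpr hx
    have hsy : 0 < Real.sqrt y := Real.sqrt_pos.mpr hy
    have h : Real.sqrt x ≤ Real.sqrt y := Real.sqrt_le_sqrt hxy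
    gcongr
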